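/- Let δ : ℕ → ℝ satisfy δ nondecreasing and nonnegative with δ(0)=0. Define I(d) = Σ_{i=1}^{d} (2i − d)·δ(i). Then I(d) ≥ 0 for all d ≥ 0, I(0) = 0, and I(d) → ∞ as d → ∞ provided there exists D such that δ(D) > 0. -/
import Mathlib


noncomputable def whittleIndex (δ : ℕ → ℝ) (d : ℕ) : ℝ :=
  ∑ i ∈ Finset.Icc 1 d, ((2 * i : ℝ) - d) * δ i

theorem whittleIndex_nonneg_zero_tendsto (δ : ℕ → ℝ) (h0 : δ 0 = 0)
    (hmono : ∀ i, δ i ≤ δ (i + 1)) (hnonneg : ∀ i, 0 ≤ δ i) :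
    (∀ d : ℕ, 0 ≤ whittleIndex δ d) ∧
    whittleIndex δ 0 = 0 ∧
    ((∃ D : ℕ, 0 < δ D) →
      Filter.Tendsto (whittleIndex δ) Filter.atTop Filter.atTop) := by
  have hM : Monotone δ := monotone_nat_of_le_succ hmono
  have hzero : whittleIndex δ 0 = 0 := by simp [whittleIndex]
  have key : ∀ d : ℕ, whittleIndex δ d + δ (d + 1) ≤ whittleIndex δ (d + 1) := by
    intro d
    have hsum : whittleIndex δ (d + 1)
        = whittleIndex δ d - (∑ i ∈ Finset.Icc 1 d, δ i) + ((d : ℝ) + 1) * δ (d + 1) := by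
      unfold whittleIndex
      rw [Finset.sum_Icc_succ_top (by omega : 1 ≤ d + 1)]
      have e1 : ∑ i ∈ Finset.Icc 1 d, ((2 * i : ℝ) - (↑(d + 1))) * δ i
          = ∑ i ∈ Finset.Icc 1 d, (((2 * i : ℝ) - d) * δ i - δ i) := by
        refine Finset.sum_congr rfl fun i _ => ?_
        push_cast
        ring
      rw [e1, Finset.sum_sub_distrib]
      push_cast
      ring
    have hb : ∑ i ∈ Finset.Icc 1 d, δ i ≤ (d : ℝ) * δ (d + 1) := by
      have := Finset.sum_le_card_nsmul (Finset.Icc 1 d) δ (δ (d + 1))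
        (fun i hi => hM (by simp [Finset.mem_Icc] at hi; omega))
      simpa [Nat.card_Icc, nsmul_eq_mul] using this
    rw [hsum]
    linarith
  have hnn : ∀ d : ℕ, 0 ≤ whittleIndex δ d := by
    intro d
    induction d with
    | zero => simp [hzero]
    | succ n ih => have := key n; have := hnonneg (n + 1); linarith
  refine ⟨hnn, hzero, ?_⟩
  rintro ⟨D, hD⟩
  have grow : ∀ d : ℕ, D ≤ d → ((d : ℝ) - D) * δ D ≤ whittleIndex δ d := by
    intro d hd
    induction d, hd using Nat.le_induction with
    | base => simpa using hnn D
    | succ n hn ih =>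
      have h1 : δ D ≤ δ (n + 1) := hM (by omega)
      have h2 := key n
      have : ((n : ℝ) + 1 - D) * δ D = ((n : ℝ) - D) * δ D + δ D := by ring
      push_cast
      linarith
  have hlow : Filter.Tendsto (fun d : ℕ => ((d : ℝ) - D) * δ D) Filter.atTop Filter.atTop := by
    apply Filter.Tendsto.atTop_mul_const hD
    exact Filter.tendsto_atTop_add_const_right _ _ tendsto_natCast_atTop_atTop
  refine Filter.tendsto_atTop_mono' _ ?_ hlow
  filter_upwards [Filter.eventually_ge_atTop D] with d hd using grow d hd
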